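/- Let β > 0 and let Ψ = P_RMGSS⁻¹ 𝒜. The characteristic polynomial of Ψ equals (X − 1)^n times the characteristic polynomial of (βI + G)⁻¹G, where G = C + B A⁻¹ Bᵀ. In particular, 1 is an eigenvalue of Ψ of algebraic multiplicity at least n, and every other eigenvalue of Ψ is an eigenvalue of (βI + G)⁻¹G. -/

import Mathlib

open Matrix Polynomial

lemma aux_eval_charpoly {k R : Type*} [Fintype k] [DecidableEq k] [CommRing R]
    (M : Matrix k k R) (r : R) :
    (M.charpoly).eval r = (r • (1 : Matrix k k R) - M).det := by
  have h : (charmatrix M).map (eval r) = r • (1 : Matrix k k R) - M := by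
    ext i j
    by_cases h : i = j
    · subst h
      simp [charmatrix_apply_eq, Matrix.one_apply, Matrix.sub_apply]
    · simp [charmatrix_apply_ne _ _ _ h, Matrix.one_apply_ne h, Matrix.sub_apply, h]
  rw [Matrix.charpoly, ← h, ← coe_evalRingHom, ← RingHom.mapMatrix_apply,
    ← RingHom.map_det, coe_evalRingHom]

lemma aux_charpoly_mul_det {k : Type*} [Fintype k] [DecidableEq k] {R : Type*} [CommRing R]
    (N M : Matrix k k R) (hN : IsUnit N.det) :
    Polynomial.C N.det * (N⁻¹ * M).charpoly
      = ((X : R[X]) • N.map Polynomial.C - M.map Polynomial.C).det := by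
  have h1 : (N.map (Polynomial.C : R → R[X])) * charmatrix (N⁻¹ * M)
      = (X : R[X]) • N.map Polynomial.C - M.map Polynomial.C := by
    rw [charmatrix, Matrix.mul_sub]
    congr 1
    · rw [scalar_apply, ← smul_one_eq_diagonal, mul_smul_comm, Matrix.mul_one]
    · rw [RingHom.mapMatrix_apply, ← Matrix.map_mul, ← Matrix.mul_assoc,
        Matrix.mul_nonsing_inv _ hN, Matrix.one_mul]
  have h2 := congrArg Matrix.det h1
  rw [Matrix.det_mul] at h2
  unfold Matrix.charpoly
  rw [← h2]
  congr 1
  rw [← RingHom.mapMatrix_apply, ← RingHom.map_det]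

lemma aux_map_inv {k : Type*} [Fintype k] [DecidableEq k] {R S : Type*} [CommRing R] [CommRing S]
    (f : R →+* S) (A : Matrix k k R) (hA : IsUnit A.det) :
    (A.map f)⁻¹ = A⁻¹.map f := by
  apply Matrix.inv_eq_left_inv
  rw [← Matrix.map_mul, Matrix.nonsing_inv_mul _ hA, Matrix.map_one _ (map_zero f) (map_one f)]

theorem RMGSS_preconditioned_charpoly
    (n m : ℕ) (hn : 0 < n) (hm : 0 < m) (hmn : m ≤ n)
    (A : Matrix (Fin n) (Fin n) ℝ) (B : Matrix (Fin m) (Fin n) ℝ)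
    (C : Matrix (Fin m) (Fin m) ℝ)
    (hA : A.PosDef) (hC : C.PosSemidef) (hB : B.rank = m)
    (β : ℝ) (hβ : 0 < β)
    (G : Matrix (Fin m) (Fin m) ℝ) (hG : G = C + B * A⁻¹ * Bᵀ)
    (Ψ : Matrix (Fin n ⊕ Fin m) (Fin n ⊕ Fin m) ℝ)
    (hΨ : Ψ = (Matrix.fromBlocks A Bᵀ (-B)
        (β • (1 : Matrix (Fin m) (Fin m) ℝ) + C))⁻¹ *
      Matrix.fromBlocks A Bᵀ (-B) C)
    (T : Matrix (Fin m) (Fin m) ℝ)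
    (hT : T = (β • (1 : Matrix (Fin m) (Fin m) ℝ) + G)⁻¹ * G) :
    Ψ.charpoly = (Polynomial.X - 1) ^ n * T.charpoly ∧
    n ≤ Polynomial.rootMultiplicity 1 Ψ.charpoly ∧
    ∀ lam : ℂ, lam ≠ 1 →
      (∃ u : Fin n ⊕ Fin m → ℂ, u ≠ 0 ∧ (Ψ.map Complex.ofReal) *ᵥ u = lam • u) →
      (∃ v : Fin m → ℂ, v ≠ 0 ∧ (T.map Complex.ofReal) *ᵥ v = lam • v) := by
  classical
  have hAdet : IsUnit A.det := isUnit_iff_ne_zero.mpr hA.det_pos.ne'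
  have hBH : Bᴴ = Bᵀ := by ext i j; simp [Matrix.conjTranspose_apply]
  have hGpsd : G.PosSemidef := by
    rw [hG]
    exact hC.add (by simpa [hBH] using hA.inv.posSemidef.mul_mul_conjTranspose_same B)
  have hSpd : (β • (1 : Matrix (Fin m) (Fin m) ℝ) + G).PosDef := by
    apply Matrix.PosDef.add_posSemidef _ hGpsd
    rw [smul_one_eq_diagonal]
    exact Matrix.PosDef.diagonal fun _ => hβ
  set S := β • (1 : Matrix (Fin m) (Fin m) ℝ) + G with hS
  set P := Matrix.fromBlocks A Bᵀ (-B) (β • (1 : Matrix (Fin m) (Fin m) ℝ) + C) with hP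
  set 𝒜 := Matrix.fromBlocks A Bᵀ (-B) C with h𝒜
  have hSdet : IsUnit S.det := isUnit_iff_ne_zero.mpr hSpd.det_pos.ne'
  haveI : Invertible A := A.invertibleOfIsUnitDet hAdet
  have hPdet : P.det = A.det * S.det := by
    rw [hP, Matrix.det_fromBlocks₁₁, invOf_eq_nonsing_inv, Matrix.neg_mul, Matrix.neg_mul,
      sub_neg_eq_add, add_assoc, hS, hG]
  have hPunit : IsUnit P.det := by rw [hPdet]; exact hAdet.mul hSdet
  have e1 : Polynomial.C P.det * Ψ.charpoly
      = ((X : ℝ[X]) • P.map Polynomial.C - 𝒜.map Polynomial.C).det := by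
    rw [hΨ]; exact aux_charpoly_mul_det P 𝒜 hPunit
  have e2 : Polynomial.C S.det * T.charpoly
      = ((X : ℝ[X]) • S.map Polynomial.C - G.map Polynomial.C).det := by
    rw [hT]; exact aux_charpoly_mul_det S G hSdet
  have hAdet' : IsUnit ((A.map (Polynomial.C : ℝ → ℝ[X])).det) := by
    rw [← RingHom.mapMatrix_apply, ← RingHom.map_det]; exact hAdet.map _
  haveI : Invertible (A.map (Polynomial.C : ℝ → ℝ[X])) := Matrix.invertibleOfIsUnitDet _ hAdet'
  have hicA : ⅟(A.map (Polynomial.C : ℝ → ℝ[X])) = A⁻¹.map Polynomial.C := by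
    rw [invOf_eq_nonsing_inv, aux_map_inv (Polynomial.C : ℝ →+* ℝ[X]) A hAdet]
  have e3 : ((X : ℝ[X]) • P.map Polynomial.C - 𝒜.map Polynomial.C).det
      = (X - 1) ^ n * (Polynomial.C A.det *
          ((X : ℝ[X]) • S.map Polynomial.C - G.map Polynomial.C).det) := by
    have hE : (X : ℝ[X]) • P.map Polynomial.C - 𝒜.map Polynomial.C
        = Matrix.fromBlocks (((X : ℝ[X]) - 1) • (1 : Matrix (Fin n) (Fin n) ℝ[X])) 0 0 1 *
          Matrix.fromBlocks (A.map Polynomial.C) (Bᵀ.map Polynomial.C)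
            (((X : ℝ[X]) - 1) • ((-B).map Polynomial.C))
            ((X : ℝ[X]) • ((β • (1 : Matrix (Fin m) (Fin m) ℝ) + C).map Polynomial.C)
              - C.map Polynomial.C) := by
      rw [hP, h𝒜, Matrix.fromBlocks_map, Matrix.fromBlocks_map, Matrix.fromBlocks_multiply,
        Matrix.fromBlocks_smul, sub_eq_add_neg, Matrix.fromBlocks_neg, Matrix.fromBlocks_add]
      congr 1 <;>
        simp [Matrix.smul_mul, Matrix.one_mul, Matrix.zero_mul, sub_smul, one_smul,
          sub_eq_add_neg] <;>
        module
    have hSchur : (X : ℝ[X]) • ((β • (1 : Matrix (Fin m) (Fin m) ℝ) + C).map Polynomial.C)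
          - C.map Polynomial.C
          - (((X : ℝ[X]) - 1) • ((-B).map Polynomial.C)) * (A⁻¹.map Polynomial.C)
              * (Bᵀ.map Polynomial.C)
        = (X : ℝ[X]) • S.map Polynomial.C - G.map Polynomial.C := by
      have hBAB : (B.map (Polynomial.C : ℝ → ℝ[X])) * (A⁻¹.map Polynomial.C)
          * (Bᵀ.map Polynomial.C) = (B * A⁻¹ * Bᵀ).map Polynomial.C := by
        rw [← Matrix.map_mul, ← Matrix.map_mul]
      have hmapadd : ∀ (k l : Type) [Fintype k] [Fintype l]
          (M N : Matrix k l ℝ), ((M + N).map (Polynomial.C : ℝ → ℝ[X]))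
            = M.map Polynomial.C + N.map Polynomial.C := fun k l _ _ M N =>
        Matrix.map_add _ (by simp) M N
      have hmapneg : ((-B).map (Polynomial.C : ℝ → ℝ[X])) = -(B.map Polynomial.C) := by
        ext i j; simp
      rw [hS, hG, hmapadd, hmapadd, hmapadd, hmapneg, Matrix.smul_mul, Matrix.smul_mul,
        Matrix.neg_mul, Matrix.neg_mul, hBAB]
      module
    rw [hE, Matrix.det_mul, Matrix.det_fromBlocks_zero₂₁, Matrix.det_smul, Matrix.det_one,
      Fintype.card_fin, mul_one, Matrix.det_one, mul_one, Matrix.det_fromBlocks₁₁, hicA, hSchur,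
      ← RingHom.mapMatrix_apply, ← RingHom.map_det]
  have key : Ψ.charpoly = (X - 1) ^ n * T.charpoly := by
    have hC0 : (Polynomial.C P.det : ℝ[X]) ≠ 0 := by
      simpa using hPunit.ne_zero
    apply mul_left_cancel₀ hC0
    rw [e1, e3, ← e2, hPdet, Polynomial.C_mul]
    ring
  refine ⟨key, ?_, ?_⟩
  · rw [key]
    have hT0 : T.charpoly ≠ 0 := T.charpoly_monic.ne_zero
    have hX1 : ((X : ℝ[X]) - 1) ≠ 0 := by simpa using Polynomial.X_sub_C_ne_zero (1 : ℝ)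
    have hprod : ((X : ℝ[X]) - 1) ^ n * T.charpoly ≠ 0 :=
      mul_ne_zero (pow_ne_zero _ hX1) hT0
    rw [Polynomial.rootMultiplicity_mul hprod]
    have : Polynomial.rootMultiplicity 1 (((X : ℝ[X]) - 1) ^ n) = n := by
      simpa using Polynomial.rootMultiplicity_X_sub_C_pow (1 : ℝ) n
    omega
  · intro lam hlam ⟨u, hu0, hu⟩
    have hdet : (lam • (1 : Matrix (Fin n ⊕ Fin m) (Fin n ⊕ Fin m) ℂ)
        - Ψ.map Complex.ofReal).det = 0 := by
      rw [← Matrix.exists_mulVec_eq_zero_iff]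
      refine ⟨u, hu0, ?_⟩
      rw [Matrix.sub_mulVec, Matrix.smul_mulVec, Matrix.one_mulVec, hu, sub_self]
    have hcp : (Ψ.map Complex.ofReal).charpoly = ((X : ℂ[X]) - 1) ^ n *
        (T.map Complex.ofReal).charpoly := by
      have h1 : (Ψ.map Complex.ofReal).charpoly = Ψ.charpoly.map Complex.ofRealHom :=
        Matrix.charpoly_map Ψ Complex.ofRealHom
      have h2 : (T.map Complex.ofReal).charpoly = T.charpoly.map Complex.ofRealHom :=
        Matrix.charpoly_map T Complex.ofRealHom
      rw [h1, key, Polynomial.map_mul, Polynomial.map_pow, Polynomial.map_sub,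
        Polynomial.map_X, Polynomial.map_one, h2]
    have heval : ((lam - 1) ^ n) * ((T.map Complex.ofReal).charpoly.eval lam) = 0 := by
      have := aux_eval_charpoly (Ψ.map Complex.ofReal) lam
      rw [hcp] at this
      simp only [eval_mul, eval_pow, eval_sub, eval_X, eval_one] at this
      rw [this, hdet]
    have hT0 : (T.map Complex.ofReal).charpoly.eval lam = 0 := by
      have h1 : (lam - 1) ^ n ≠ 0 := pow_ne_zero _ (sub_ne_zero.mpr hlam)
      exact (mul_eq_zero.mp heval).resolve_left h1
    have hdetT : (lam • (1 : Matrix (Fin m) (Fin m) ℂ) - T.map Complex.ofReal).det = 0 := by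
      rw [← aux_eval_charpoly, hT0]
    obtain ⟨v, hv0, hv⟩ := (Matrix.exists_mulVec_eq_zero_iff).mpr hdetT
    refine ⟨v, hv0, ?_⟩
    have := hv
    rw [Matrix.sub_mulVec, Matrix.smul_mulVec, Matrix.one_mulVec, sub_eq_zero] at this
    exact this.symm
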